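/- Let H be a real Hilbert space, Φ : ℕ → H a Hilbert basis of H, and λ : ℕ → ℝ with 0 < λ n for all n. Fix z ∈ H and t ∈ ℝ, and let v := ∫₀ᵗ S(σ) z dσ (an H-valued Bochner integral). Then Σ_n (λ n)²·⟨v, Φ n⟩² < ∞ (i.e. v ∈ D(A)), and Σ_n (λ n)·⟨v, Φ n⟩·(Φ n) = z − C(t) z, i.e. C(t) z − z = −A ∫₀ᵗ S(σ) z dσ. -/

import Mathlib

open scoped RealInnerProductSpace

private lemma memlp_two_of_sq {a : ℕ → ℝ} (h : Summable fun n => a n ^ 2) :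
    Memℓp a 2 := by
  apply memℓp_gen
  have : ∀ n, ‖a n‖ ^ (2 : ENNReal).toReal = a n ^ 2 := by
    intro n
    rw [ENNReal.toReal_ofNat, show ((2:ℝ)) = ((2:ℕ):ℝ) by norm_num, Real.rpow_natCast]
    simp [sq_abs]
  exact h.congr fun n => (this n).symm

private lemma abs_sin_sub_sin (a b : ℝ) : |Real.sin a - Real.sin b| ≤ |a - b| := by
  rw [Real.sin_sub_sin]
  calc |2 * Real.sin ((a - b) / 2) * Real.cos ((a + b) / 2)|
      = 2 * |Real.sin ((a - b) / 2)| * |Real.cos ((a + b) / 2)| := by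
        rw [abs_mul, abs_mul]; norm_num
    _ ≤ 2 * |(a - b) / 2| * 1 := by
        apply mul_le_mul (by
          have := Real.abs_sin_le_abs (x := (a - b) / 2)
          nlinarith [abs_nonneg ((a-b)/2)]) (Real.abs_cos_le_one _)
          (abs_nonneg _) (by positivity)
    _ = |a - b| := by rw [abs_div, abs_two]; ring

set_option maxHeartbeats 1000000 in
/-- `C(t) z − z = −A ∫₀ᵗ S(σ) z dσ`: with `v = ∫₀ᵗ S(σ) z dσ`, one has `v ∈ D(A)`
(i.e. `Σ_n λ_n² ⟨v, Φ_n⟩² < ∞`) and `A v = z − C(t) z`. -/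
theorem stmt11 {H : Type*} [NormedAddCommGroup H] [InnerProductSpace ℝ H]
    [CompleteSpace H] (Φ : HilbertBasis ℕ ℝ H) (l : ℕ → ℝ) (hl : ∀ n, 0 < l n)
    (z : H) (t : ℝ) (v : H)
    (hv : v = ∫ σ in (0 : ℝ)..t,
      ∑' n, ((l n) ^ (-(1 / 2 : ℝ)) * Real.sin (Real.sqrt (l n) * σ) * ⟪z, Φ n⟫)
        • (Φ n : H)) :
    (Summable fun n => (l n) ^ 2 * ⟪v, Φ n⟫ ^ 2) ∧
    ∑' n, (l n * ⟪v, Φ n⟫) • (Φ n : H)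
      = z - ∑' n, (Real.cos (Real.sqrt (l n) * t) * ⟪z, Φ n⟫) • (Φ n : H) := by
  classical
  set zc : ℕ → ℝ := fun n => ⟪z, Φ n⟫ with hzc
  have hpow2 : ∀ x : ℝ, x ^ ((2 : ENNReal).toReal) = x ^ 2 := by
    intro x
    rw [ENNReal.toReal_ofNat, show ((2:ℝ)) = ((2:ℕ):ℝ) by norm_num, Real.rpow_natCast]
  have key : ∀ w : lp (fun _ : ℕ => ℝ) 2, ‖w‖ ^ 2 = ∑' n, (w n) ^ 2 := by
    intro w
    have h := lp.norm_rpow_eq_tsum (p := 2) (by norm_num) w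
    rw [hpow2] at h
    rw [h]
    congr 1; funext n
    rw [hpow2, Real.norm_eq_abs, sq_abs]
  have hz2 : Summable fun n => zc n ^ 2 := by
    have h := ((lp.memℓp (Φ.repr z)).summable (by norm_num : 0 < (2 : ENNReal).toReal))
    apply h.congr
    intro n
    rw [hpow2, Real.norm_eq_abs, sq_abs, Φ.repr_apply_apply, real_inner_comm]
  have hznorm : ‖z‖ ^ 2 = ∑' n, zc n ^ 2 := by
    rw [← Φ.repr.norm_map z, key]
    congr 1; funext n
    rw [Φ.repr_apply_apply, real_inner_comm]
  have hr : ∀ n, (l n) ^ (-(1/2:ℝ)) = (Real.sqrt (l n))⁻¹ := by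
    intro n
    rw [Real.rpow_neg (hl n).le, Real.sqrt_eq_rpow]
  set c : ℕ → ℝ → ℝ := fun n σ =>
    (l n) ^ (-(1/2:ℝ)) * Real.sin (Real.sqrt (l n) * σ) * zc n with hcdef
  have hsq : ∀ n, 0 < Real.sqrt (l n) := fun n => Real.sqrt_pos.2 (hl n)
  have hcb : ∀ n σ σ', |c n σ - c n σ'| ≤ |σ - σ'| * |zc n| := by
    intro n σ σ'
    have hd : c n σ - c n σ' = (Real.sqrt (l n))⁻¹ *
        (Real.sin (Real.sqrt (l n) * σ) - Real.sin (Real.sqrt (l n) * σ')) * zc n := by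
      simp only [hcdef, hr n]; ring
    rw [hd, abs_mul, abs_mul]
    have h1 : |Real.sin (Real.sqrt (l n) * σ) - Real.sin (Real.sqrt (l n) * σ')|
        ≤ Real.sqrt (l n) * |σ - σ'| := by
      calc |Real.sin (Real.sqrt (l n) * σ) - Real.sin (Real.sqrt (l n) * σ')|
          ≤ |Real.sqrt (l n) * σ - Real.sqrt (l n) * σ'| := abs_sin_sub_sin _ _
        _ = Real.sqrt (l n) * |σ - σ'| := by
            rw [← mul_sub, abs_mul, abs_of_pos (hsq n)]
    have h2 : |(Real.sqrt (l n))⁻¹| = (Real.sqrt (l n))⁻¹ :=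
      abs_of_pos (inv_pos.2 (hsq n))
    rw [h2]
    have h3 : (Real.sqrt (l n))⁻¹ * |Real.sin (Real.sqrt (l n) * σ) -
        Real.sin (Real.sqrt (l n) * σ')| ≤ (Real.sqrt (l n))⁻¹ * (Real.sqrt (l n) * |σ - σ'|) :=
      mul_le_mul_of_nonneg_left h1 (inv_pos.2 (hsq n)).le
    have h4 : (Real.sqrt (l n))⁻¹ * (Real.sqrt (l n) * |σ - σ'|) = |σ - σ'| :=
      inv_mul_cancel_left₀ (hsq n).ne' _
    calc (Real.sqrt (l n))⁻¹ * |Real.sin (Real.sqrt (l n) * σ) -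
          Real.sin (Real.sqrt (l n) * σ')| * |zc n|
        ≤ (Real.sqrt (l n))⁻¹ * (Real.sqrt (l n) * |σ - σ'|) * |zc n| :=
          mul_le_mul_of_nonneg_right h3 (abs_nonneg _)
      _ = |σ - σ'| * |zc n| := by rw [h4]
  have hc0 : ∀ n, c n 0 = 0 := by intro n; simp [hcdef]
  have hcb' : ∀ n σ, |c n σ| ≤ |σ| * |zc n| := by
    intro n σ
    have := hcb n σ 0
    simpa [hc0 n] using this
  have hcsq : ∀ n σ σ', (c n σ - c n σ') ^ 2 ≤ (σ - σ') ^ 2 * zc n ^ 2 := by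
    intro n σ σ'
    have h := hcb n σ σ'
    nlinarith [abs_nonneg (c n σ - c n σ'), abs_nonneg (σ - σ'), abs_nonneg (zc n),
      sq_abs (c n σ - c n σ'), sq_abs (σ - σ'), sq_abs (zc n)]
  have hmem : ∀ σ, Memℓp (fun n => c n σ) 2 := by
    intro σ
    apply memlp_two_of_sq
    apply Summable.of_nonneg_of_le (fun n => sq_nonneg _) _ (hz2.mul_left (σ ^ 2))
    intro n
    have := hcsq n σ 0
    simpa [hc0 n] using this
  set g : ℝ → lp (fun _ : ℕ => ℝ) 2 := fun σ => ⟨fun n => c n σ, hmem σ⟩ with hgdef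
  set f : ℝ → H := fun σ => Φ.repr.symm (g σ) with hfdef
  have hfs : ∀ σ, HasSum (fun n => c n σ • (Φ n : H)) (f σ) := fun σ =>
    Φ.hasSum_repr_symm (g σ)
  have hfc : ∀ σ n, ⟪f σ, Φ n⟫ = c n σ := by
    intro σ n
    rw [real_inner_comm, ← Φ.repr_apply_apply, hfdef]
    simp only [LinearIsometryEquiv.apply_symm_apply]
    rfl
  have hveq : v = ∫ σ in (0:ℝ)..t, f σ := by
    rw [hv]
    congr 1
    funext σ
    exact (hfs σ).tsum_eq
  -- Lipschitz bound for f
  have hnorm : ∀ σ σ', ‖f σ - f σ'‖ ≤ |σ - σ'| * ‖z‖ := by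
    intro σ σ'
    have hmap : f σ - f σ' = Φ.repr.symm (g σ - g σ') := by
      rw [hfdef]; simp [map_sub]
    rw [hmap, LinearIsometryEquiv.norm_map]
    have hB : (0:ℝ) ≤ |σ - σ'| * ‖z‖ := by positivity
    rw [← Real.sqrt_sq (norm_nonneg _), ← Real.sqrt_sq hB]
    apply Real.sqrt_le_sqrt
    rw [key]
    have hsum_left : Summable fun n => ((g σ - g σ') n) ^ 2 := by
      have h := ((lp.memℓp (g σ - g σ')).summable (by norm_num : 0 < (2 : ENNReal).toReal))
      apply h.congr
      intro n
      rw [hpow2, Real.norm_eq_abs, sq_abs]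
    have hco : ∀ n, (g σ - g σ') n = c n σ - c n σ' := fun n => rfl
    calc ∑' n, ((g σ - g σ') n) ^ 2
        ≤ ∑' n, (σ - σ') ^ 2 * zc n ^ 2 := by
          apply Summable.tsum_le_tsum _ hsum_left (hz2.mul_left ((σ - σ') ^ 2))
          intro n
          rw [hco n]
          exact hcsq n σ σ'
      _ = (σ - σ') ^ 2 * ∑' n, zc n ^ 2 := tsum_mul_left
      _ = (|σ - σ'| * ‖z‖) ^ 2 := by
          rw [← hznorm, mul_pow, sq_abs]
  have hfcont : Continuous f := by
    have : LipschitzWith ‖z‖₊ f := by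
      apply LipschitzWith.of_dist_le_mul
      intro x y
      rw [dist_eq_norm, Real.dist_eq]
      calc ‖f x - f y‖ ≤ |x - y| * ‖z‖ := hnorm x y
        _ = ↑‖z‖₊ * |x - y| := by rw [coe_nnnorm]; ring
    exact this.continuous
  have hint : IntervalIntegrable f MeasureTheory.volume 0 t :=
    hfcont.intervalIntegrable 0 t
  -- coefficient computation
  have hvc : ∀ n, ⟪v, Φ n⟫ = (1 - Real.cos (Real.sqrt (l n) * t)) * zc n / l n := by
    intro n
    have h1 : ⟪v, Φ n⟫ = ∫ σ in (0:ℝ)..t, c n σ := by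
      have h := (innerSL ℝ (Φ n : H)).intervalIntegral_comp_comm hint
      simp only [innerSL_apply_apply] at h
      rw [real_inner_comm, hveq, ← h]
      congr 1
      funext σ
      rw [real_inner_comm]
      exact hfc σ n
    have h2 : (∫ σ in (0:ℝ)..t, c n σ)
        = ((Real.sqrt (l n))⁻¹ * zc n) * ∫ σ in (0:ℝ)..t, Real.sin (Real.sqrt (l n) * σ) := by
      rw [← intervalIntegral.integral_const_mul]
      congr 1
      funext σ
      simp only [hcdef, hr n]
      ring
    have hs0 : Real.sqrt (l n) ≠ 0 := (hsq n).ne'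
    have h3 : (∫ σ in (0:ℝ)..t, Real.sin (Real.sqrt (l n) * σ))
        = (Real.sqrt (l n))⁻¹ * (1 - Real.cos (Real.sqrt (l n) * t)) := by
      rw [intervalIntegral.integral_comp_mul_left Real.sin hs0, integral_sin]
      simp [smul_eq_mul]
    rw [h1, h2, h3]
    have hms : Real.sqrt (l n) * Real.sqrt (l n) = l n := Real.mul_self_sqrt (hl n).le
    have hms2 : Real.sqrt (l n) ^ 2 = l n := Real.sq_sqrt (hl n).le
    rw [eq_div_iff (hl n).ne']
    field_simp
    linear_combination (zc n * Real.cos (Real.sqrt (l n) * t) - zc n) * hms2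
  have hlv : ∀ n, l n * ⟪v, Φ n⟫ = (1 - Real.cos (Real.sqrt (l n) * t)) * zc n := by
    intro n
    rw [hvc n, mul_comm, div_mul_cancel₀ _ (hl n).ne']
  have hsum1 : Summable fun n => (l n) ^ 2 * ⟪v, Φ n⟫ ^ 2 := by
    have heq : ∀ n, (l n) ^ 2 * ⟪v, Φ n⟫ ^ 2
        = ((1 - Real.cos (Real.sqrt (l n) * t)) * zc n) ^ 2 := by
      intro n
      rw [← hlv n]; ring
    apply Summable.of_nonneg_of_le (fun n => by positivity) _ (hz2.mul_left 4)
    intro n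
    rw [heq n]
    have hc1 := Real.cos_le_one (Real.sqrt (l n) * t)
    have hc2 := Real.neg_one_le_cos (Real.sqrt (l n) * t)
    have hb : (1 - Real.cos (Real.sqrt (l n) * t)) ^ 2 ≤ 4 := by nlinarith
    calc ((1 - Real.cos (Real.sqrt (l n) * t)) * zc n) ^ 2
        = (1 - Real.cos (Real.sqrt (l n) * t)) ^ 2 * zc n ^ 2 := by ring
      _ ≤ 4 * zc n ^ 2 := by nlinarith [sq_nonneg (zc n)]
  refine ⟨hsum1, ?_⟩
  have hzsum : HasSum (fun n => zc n • (Φ n : H)) z := by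
    have h := Φ.hasSum_repr z
    have he : (fun n => Φ.repr z n • (Φ n : H)) = fun n => zc n • (Φ n : H) := by
      funext n
      rw [Φ.repr_apply_apply, real_inner_comm]
    rwa [he] at h
  have hcossq : Summable fun n => (Real.cos (Real.sqrt (l n) * t) * zc n) ^ 2 := by
    apply Summable.of_nonneg_of_le (fun n => sq_nonneg _) _ hz2
    intro n
    nlinarith [mul_le_mul_of_nonneg_right (Real.cos_sq_le_one (Real.sqrt (l n) * t))
      (sq_nonneg (zc n))]
  have hcossum : HasSum (fun n => (Real.cos (Real.sqrt (l n) * t) * zc n) • (Φ n : H))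
      (Φ.repr.symm ⟨fun n => Real.cos (Real.sqrt (l n) * t) * zc n, memlp_two_of_sq hcossq⟩) :=
    Φ.hasSum_repr_symm _
  have hdiff := hzsum.sub hcossum
  have he2 : (fun n => zc n • (Φ n : H) - (Real.cos (Real.sqrt (l n) * t) * zc n) • (Φ n : H))
      = fun n => (l n * ⟪v, Φ n⟫) • (Φ n : H) := by
    funext n
    rw [hlv n, ← sub_smul]
    congr 1
    ring
  rw [he2] at hdiff
  rw [hdiff.tsum_eq, hcossum.tsum_eq]
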